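/- For natural numbers d ≥ 2 and n ≥ d, the uniform matroid U_{d,n} is regular if and only if it is binary, if and only if it has a unique minimal tropical basis. -/

import Mathlib

open scoped symmDiff

/-- A matroid presented by its circuit set on ground set `Fin n`. -/
structure CircuitSet (n : ℕ) where
  circuits : Set (Finset (Fin n))
  empty_not_mem : ∅ ∉ circuits
  antichain : ∀ C₁ ∈ circuits, ∀ C₂ ∈ circuits, C₁ ⊆ C₂ → C₁ = C₂
  elimination : ∀ C₁ ∈ circuits, ∀ C₂ ∈ circuits, C₁ ≠ C₂ →
    ∀ e ∈ C₁ ∩ C₂, ∃ C₃ ∈ circuits, C₃ ⊆ (C₁ ∪ C₂) \ {e}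

/-- Tropical projective space: tuples in (ℝ ∪ {±∞})ᵀ, not identically -∞
(we model tropical numbers ℝ ∪ {-∞} inside `EReal`; points of `TP` avoid `⊤` as well). -/
def TP (n : ℕ) : Set (Fin n → EReal) :=
  {x | (∀ i, x i ≠ ⊤) ∧ ∃ i, x i ≠ ⊥}

/-- The tropical hyperplane of a circuit: the maximum over the circuit is attained twice. -/
def V {n : ℕ} (D : Finset (Fin n)) : Set (Fin n → EReal) :=
  {x | ∃ i ∈ D, ∃ j ∈ D, i ≠ j ∧ x i = x j ∧ ∀ k ∈ D, x k ≤ x i}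

/-- `B` is a tropical basis: a subset of the circuit set whose tropical prevariety
equals the Bergman fan. -/
def IsTropicalBasis {n : ℕ} (M : CircuitSet n) (B : Set (Finset (Fin n))) : Prop :=
  B ⊆ M.circuits ∧ (TP n ∩ ⋂ D ∈ B, V D) = (TP n ∩ ⋂ D ∈ M.circuits, V D)

def IsMinimalTropicalBasis {n : ℕ} (M : CircuitSet n) (B : Set (Finset (Fin n))) : Prop :=
  IsTropicalBasis M B ∧ ∀ B' ⊂ B, ¬ IsTropicalBasis M B'

def HasUniqueMinimalTropicalBasis {n : ℕ} (M : CircuitSet n) : Prop :=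
  ∃! B, IsMinimalTropicalBasis M B

/-- The intersection `B_M` of all tropical bases of `M`. -/
def troBasisInter {n : ℕ} (M : CircuitSet n) : Set (Finset (Fin n)) :=
  ⋂₀ {B | IsTropicalBasis M B}

/-- Simple matroid: every circuit has cardinality at least 3. -/
def CircuitSet.Simple {n : ℕ} (M : CircuitSet n) : Prop :=
  ∀ C ∈ M.circuits, 3 ≤ C.card

/-- Binary matroid (circuit characterization): the symmetric difference of any two
circuits is a disjoint union of circuits. -/
def CircuitSet.BinarySD {n : ℕ} (M : CircuitSet n) : Prop :=
  ∀ C₁ ∈ M.circuits, ∀ C₂ ∈ M.circuits,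
    ∃ S : Finset (Finset (Fin n)), ↑S ⊆ M.circuits ∧
      (S : Set (Finset (Fin n))).PairwiseDisjoint id ∧ C₁ ∆ C₂ = S.sup id

/-- `M` is representable over the field `K`: its circuits are exactly the minimal
linearly dependent subsets of some family of vectors. -/
def Represents (K : Type) [Field K] {n : ℕ} (M : CircuitSet n) : Prop :=
  ∃ (m : ℕ) (v : Fin n → (Fin m → K)),
    ∀ C : Finset (Fin n), C ∈ M.circuits ↔
      (¬ LinearIndependent K (fun i : ↥C => v i.1) ∧
        ∀ D : Finset (Fin n), D ⊂ C → LinearIndependent K (fun i : ↥D => v i.1))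


section
variable {K W : Type*} [Field K] [AddCommGroup W] [Module K W]

lemma linIndep_iff_sum {n : ℕ} (v : Fin n → W) (C : Finset (Fin n)) :
    LinearIndependent K (fun i : ↥C => v i.1) ↔
      ∀ g : Fin n → K, ∑ i ∈ C, g i • v i = 0 → ∀ i ∈ C, g i = 0 := by
  classical
  rw [Fintype.linearIndependent_iff]
  constructor
  · intro H g hg i hi
    exact H (fun i : ↥C => g i) (by rw [Finset.sum_coe_sort C (fun i => g i • v i)]; exact hg) ⟨i, hi⟩
  · intro H g hg i
    have h2 : ∑ j ∈ C, (fun j => if h : j ∈ C then g ⟨j, h⟩ else 0) j • v j = 0 := by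
      rw [← Finset.sum_coe_sort C (fun j => (if h : j ∈ C then g ⟨j, h⟩ else 0) • v j)]
      simpa using hg
    have := H _ h2 i.1 i.2
    simpa [i.2] using this

end

lemma indep_single {K : Type} [Field K] {n : ℕ} (C : Finset (Fin n)) :
    LinearIndependent K (fun i : ↥C => (Pi.single i.1 1 : Fin n → K)) := by
  classical
  rw [linIndep_iff_sum (fun j : Fin n => (Pi.single j 1 : Fin n → K)) C]
  intro g hg i hi
  have := congrFun hg i
  simp only [Finset.sum_apply, Pi.smul_apply, Pi.single_apply, smul_eq_mul, mul_ite, mul_one,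
    mul_zero, Pi.zero_apply] at this
  rwa [Finset.sum_ite_eq C i g, if_pos hi] at this

noncomputable def circVec (K : Type) [Field K] (d : ℕ) : Fin (d+1) → Fin d → K := fun i =>
  if h : (i:ℕ) < d then (Pi.single ⟨i,h⟩ 1) else (fun _ => -1)

lemma circVec_apply (K : Type) [Field K] (d : ℕ) (i : Fin (d+1)) (k : Fin d) :
    circVec K d i k =
      (if Fin.castSucc k = i then (1:K) else 0) + (if Fin.last d = i then -1 else 0) := by
  unfold circVec
  by_cases h : (i:ℕ) < d
  · rw [dif_pos h, Pi.single_apply,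
      if_neg (show ¬ Fin.last d = i from by simp only [Fin.ext_iff, Fin.val_last]; omega), add_zero]
    by_cases hk : (k:ℕ) = (i:ℕ)
    · rw [if_pos (show k = ⟨i,h⟩ from Fin.ext (by simpa using hk)),
        if_pos (show Fin.castSucc k = i from Fin.ext (by simpa using hk))]
    · rw [if_neg (fun e => hk (by simpa using congrArg Fin.val e)),
        if_neg (fun e => hk (by simpa using congrArg Fin.val e))]
  · rw [dif_neg h,
      if_neg (show ¬ Fin.castSucc k = i from fun e => by
        have := congrArg Fin.val e; simp only [Fin.coe_castSucc] at this; omega),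
      if_pos (show Fin.last d = i from Fin.ext (by simp only [Fin.val_last]; omega))]
    simp

lemma circVec_sum (K : Type) [Field K] (d : ℕ) (C : Finset (Fin (d+1)))
    (g : Fin (d+1) → K) (k : Fin d) :
    (∑ i ∈ C, g i • circVec K d i) k =
      (if Fin.castSucc k ∈ C then g (Fin.castSucc k) else 0)
        - (if Fin.last d ∈ C then g (Fin.last d) else 0) := by
  classical
  rw [Finset.sum_apply]
  calc ∑ i ∈ C, (g i • circVec K d i) k
      = ∑ i ∈ C, ((if Fin.castSucc k = i then g i else 0) +
          (if Fin.last d = i then -(g i) else 0)) := by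
        refine Finset.sum_congr rfl fun i hi => ?_
        rw [Pi.smul_apply, circVec_apply, smul_eq_mul, mul_add]
        congr 1 <;> split_ifs <;> ring
    _ = _ := by
        rw [Finset.sum_add_distrib, Finset.sum_ite_eq C (Fin.castSucc k) g,
          Finset.sum_ite_eq C (Fin.last d) (fun i => -(g i))]
        split_ifs <;> ring

lemma circVec_indep (K : Type) [Field K] (d : ℕ) (C : Finset (Fin (d+1)))
    (hC : C ≠ Finset.univ) :
    LinearIndependent K (fun i : ↥C => circVec K d i.1) := by
  rw [linIndep_iff_sum]
  intro g hg i hi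
  obtain ⟨a, ha⟩ : ∃ a, a ∉ C := by
    by_contra h
    push_neg at h
    exact hC (Finset.eq_univ_iff_forall.mpr h)
  have key : ∀ k : Fin d,
      (if Fin.castSucc k ∈ C then g (Fin.castSucc k) else 0)
        = (if Fin.last d ∈ C then g (Fin.last d) else 0) := by
    intro k
    have h1 := congrFun hg k
    rw [circVec_sum, Pi.zero_apply] at h1
    exact sub_eq_zero.mp h1
  have hlast : (if Fin.last d ∈ C then g (Fin.last d) else 0) = 0 := by
    by_cases hal : a = Fin.last d
    · rw [if_neg (hal ▸ ha)]
    · have h' : (a:ℕ) < d := by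
        have h2 := a.2
        have h3 : (a:ℕ) ≠ d := fun e => hal (Fin.ext (by simp [Fin.val_last, e]))
        omega
      have h4 := key ⟨a, h'⟩
      rw [show Fin.castSucc ⟨(a:ℕ), h'⟩ = a from Fin.ext rfl, if_neg ha] at h4
      exact h4.symm
  by_cases hil : i = Fin.last d
  · rw [← hlast, hil, if_pos (hil ▸ hi)]
  · have h' : (i:ℕ) < d := by
      have h2 := i.2
      have h3 : (i:ℕ) ≠ d := fun e => hil (Fin.ext (by simp [Fin.val_last, e]))
      omega
    have h4 := key ⟨i, h'⟩
    rwa [hlast, show Fin.castSucc ⟨(i:ℕ), h'⟩ = i from Fin.ext rfl, if_pos hi] at h4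

lemma circVec_dep (K : Type) [Field K] (d : ℕ) :
    ¬ LinearIndependent K (fun i : ↥(Finset.univ : Finset (Fin (d+1))) => circVec K d i.1) := by
  rw [linIndep_iff_sum]
  push_neg
  refine ⟨fun _ => 1, ?_, Fin.last d, Finset.mem_univ _, one_ne_zero⟩
  funext k
  rw [circVec_sum, Pi.zero_apply, if_pos (Finset.mem_univ _), if_pos (Finset.mem_univ _), sub_self]

lemma represents_free (K : Type) [Field K] {n d : ℕ} (hnd : n < d + 1) (M : CircuitSet n)
    (hM : M.circuits = {C : Finset (Fin n) | C.card = d + 1}) : Represents K M := by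
  refine ⟨n, fun i => Pi.single i 1, fun C => ?_⟩
  rw [hM]
  simp only [Set.mem_setOf_eq]
  constructor
  · intro hc
    have h1 := Finset.card_le_univ C
    rw [Fintype.card_fin] at h1
    omega
  · rintro ⟨hdep, -⟩
    exact absurd (indep_single C) hdep

lemma represents_circ (K : Type) [Field K] {d : ℕ} (M : CircuitSet (d+1))
    (hM : M.circuits = {C : Finset (Fin (d+1)) | C.card = d + 1}) : Represents K M := by
  refine ⟨d, circVec K d, fun C => ?_⟩
  rw [hM]
  simp only [Set.mem_setOf_eq]
  rw [show (C.card = d + 1) ↔ C = Finset.univ from by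
    rw [← Finset.card_eq_iff_eq_univ, Fintype.card_fin]]
  constructor
  · rintro rfl
    exact ⟨circVec_dep K d, fun D hD => circVec_indep K d D hD.ne⟩
  · rintro ⟨hdep, -⟩
    by_contra hC
    exact hdep (circVec_indep K d C hC)

lemma not_represents {n d : ℕ} (hd : 2 ≤ d) (hn2 : d + 2 ≤ n) (M : CircuitSet n)
    (hM : M.circuits = {C : Finset (Fin n) | C.card = d + 1}) :
    ¬ Represents (ZMod 2) M := by
  classical
  rintro ⟨m, v, h⟩
  rw [hM] at h
  simp only [Set.mem_setOf_eq] at h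
  have indep : ∀ N, ∀ C : Finset (Fin n), C.card = N → C.card ≤ d →
      LinearIndependent (ZMod 2) (fun i : ↥C => v i.1) := by
    intro N
    induction N using Nat.strong_induction_on with
    | _ N ih =>
      intro C hCN hcard
      by_contra hdep
      have : C.card = d + 1 := (h C).mpr
        ⟨hdep, fun D hD => ih D.card (hCN ▸ Finset.card_lt_card hD) D rfl
          (le_trans (Finset.card_le_card hD.subset) hcard)⟩
      omega
  have indep' := fun (C : Finset (Fin n)) (hc : C.card ≤ d) =>
    (linIndep_iff_sum v C).mp (indep C.card C rfl hc)
  set B : Finset (Fin n) := Finset.univ.map (Fin.castLEEmb (show d ≤ n by omega)) with hB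
  have hBcard : B.card = d := by simp [hB]
  have hBmem : ∀ j : Fin n, j ∈ B ↔ (j:ℕ) < d := by
    intro j
    constructor
    · intro hj
      rw [hB, Finset.mem_map] at hj
      obtain ⟨k, -, hk⟩ := hj
      have h2 := congrArg Fin.val hk
      simp only [Fin.castLEEmb_apply, Fin.coe_castLE] at h2
      have := k.2
      omega
    · intro hj
      rw [hB, Finset.mem_map]
      exact ⟨⟨(j:ℕ), hj⟩, Finset.mem_univ _, Fin.ext rfl⟩
  have zmod : ∀ a : ZMod 2, a ≠ 0 → a = 1 := by decide
  have addself : ∀ w : Fin m → ZMod 2, w + w = 0 := by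
    intro w
    funext k
    have h2 : ∀ a : ZMod 2, a + a = 0 := by decide
    exact h2 _
  have claim : ∀ j : Fin n, j ∉ B → v j + ∑ i ∈ B, v i = 0 := by
    intro j hj
    have hCcard : (insert j B).card = d + 1 := by
      rw [Finset.card_insert_of_notMem hj, hBcard]
    have hdep := ((h _).mp hCcard).1
    rw [linIndep_iff_sum] at hdep
    push_neg at hdep
    obtain ⟨G, hG0, i₀, hi₀, hi₀ne⟩ := hdep
    have hGj : G j ≠ 0 := by
      intro hGj
      have hsum : ∑ i ∈ B, G i • v i = 0 := by
        rw [Finset.sum_insert hj, hGj, zero_smul, zero_add] at hG0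
        exact hG0
      have hzero := indep' B (le_of_eq hBcard) G hsum
      rcases Finset.mem_insert.mp hi₀ with rfl | hi₀'
      · exact hi₀ne hGj
      · exact hi₀ne (hzero _ hi₀')
    have hGj1 : G j = 1 := zmod _ hGj
    set S : Finset (Fin n) := B.filter (fun i => G i ≠ 0) with hS
    have hSsub : S ⊆ B := Finset.filter_subset _ _
    have hrel : v j + ∑ i ∈ S, v i = 0 := by
      have e1 : ∑ i ∈ S, G i • v i = ∑ i ∈ B, G i • v i := by
        rw [hS]
        exact Finset.sum_filter_of_ne (fun x _ hne h0 => hne (by rw [h0, zero_smul]))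
      have e2 : ∑ i ∈ S, G i • v i = ∑ i ∈ S, v i :=
        Finset.sum_congr rfl fun i hi => by
          rw [zmod (G i) (Finset.mem_filter.mp hi).2, one_smul]
      rw [Finset.sum_insert hj, hGj1, one_smul, ← e1, e2] at hG0
      exact hG0
    by_cases hSB : S = B
    · rw [hSB] at hrel
      exact hrel
    · exfalso
      have hScard : S.card < d :=
        lt_of_lt_of_le (Finset.card_lt_card (hSsub.ssubset_of_ne hSB)) (le_of_eq hBcard)
      have hjS : j ∉ S := fun hjS => hj (hSsub hjS)
      have hC'card : (insert j S).card ≤ d := by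
        rw [Finset.card_insert_of_notMem hjS]
        omega
      have hC'sum : ∑ i ∈ insert j S, (fun _ => (1 : ZMod 2)) i • v i = 0 := by
        rw [Finset.sum_insert hjS]
        simpa using hrel
      have h1 := indep' (insert j S) hC'card (fun _ => 1) hC'sum j (Finset.mem_insert_self _ _)
      exact one_ne_zero h1
  have hj1 : (⟨d, by omega⟩ : Fin n) ∉ B := by rw [hBmem]; simp
  have hj2 : (⟨d+1, by omega⟩ : Fin n) ∉ B := by rw [hBmem]; simp
  have hne : (⟨d, by omega⟩ : Fin n) ≠ ⟨d+1, by omega⟩ := by simp [Fin.ext_iff]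
  have hv : v ⟨d, by omega⟩ = v ⟨d+1, by omega⟩ :=
    add_right_cancel ((claim _ hj1).trans (claim _ hj2).symm)
  set P : Finset (Fin n) := {(⟨d, by omega⟩ : Fin n), ⟨d+1, by omega⟩} with hP
  have hPcard : P.card = 2 := by
    rw [hP, Finset.card_insert_of_notMem (by simp [Fin.ext_iff]), Finset.card_singleton]
  have hPsum : ∑ i ∈ P, (fun _ => (1 : ZMod 2)) i • v i = 0 := by
    rw [hP, Finset.sum_pair hne]
    simp only [one_smul]
    rw [hv]
    exact addself _
  have h1 := indep' P (by rw [hPcard]; exact hd) (fun _ => 1) hPsum ⟨d, by omega⟩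
    (by rw [hP]; exact Finset.mem_insert_self _ _)
  exact one_ne_zero h1


lemma x0_TP {n : ℕ} (hn : 0 < n) :
    (fun i : Fin n => if i = ⟨0, hn⟩ then (0:EReal) else ⊥) ∈ TP n := by
  constructor
  · intro i
    dsimp only
    split_ifs
    · simp
    · simp
  · exact ⟨⟨0, hn⟩, by simp⟩

lemma x0_not_V {n : ℕ} (hn : 0 < n) (C : Finset (Fin n)) (hC : (⟨0, hn⟩ : Fin n) ∈ C) :
    (fun i : Fin n => if i = ⟨0, hn⟩ then (0:EReal) else ⊥) ∉ V C := by
  rintro ⟨i, hi, j, hj, hij, hxij, hmax⟩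
  have h0 := hmax _ hC
  simp only [if_pos rfl] at h0
  have hi0 : i = ⟨0, hn⟩ := by
    by_contra hne
    simp only [if_neg hne] at h0
    exact absurd (le_bot_iff.mp h0) (by simp)
  have hj0 : j = ⟨0, hn⟩ := by
    by_contra hne
    simp only [hi0, if_pos rfl, if_neg hne] at hxij
    exact absurd hxij (by simp)
  exact hij (hi0.trans hj0.symm)

lemma key_drop {n d : ℕ} (hd : 2 ≤ d) (hn2 : d + 2 ≤ n) (C₀ : Finset (Fin n))
    (hC₀ : C₀.card = d + 1) (x : Fin n → EReal)
    (hx : ∀ C : Finset (Fin n), C.card = d + 1 → C ≠ C₀ → x ∈ V C) :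
    x ∈ V C₀ := by
  classical
  have hnpos : 0 < n := by omega
  obtain ⟨a₀, -, ha₀⟩ :=
    Finset.exists_max_image Finset.univ x ⟨⟨0, hnpos⟩, Finset.mem_univ _⟩
  have ha₀' : ∀ b, x b ≤ x a₀ := fun b => ha₀ b (Finset.mem_univ b)
  set A : Finset (Fin n) := Finset.univ.filter (fun i => x i = x a₀) with hA
  have memA : ∀ i, i ∈ A ↔ x i = x a₀ := fun i => by simp [hA]
  have ha₀A : a₀ ∈ A := (memA a₀).mpr rfl
  have bad : ∀ C : Finset (Fin n), C.card = d + 1 → C ≠ C₀ → ∀ a, a ∈ C → a ∈ A →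
      (∀ i ∈ C, i ∈ A → i = a) → False := by
    intro C hCcard hCne a haC haA hone
    obtain ⟨i, hi, j, hj, hij, hxij, hmax⟩ := hx C hCcard hCne
    have hia : i ∈ A := (memA i).mpr
      (le_antisymm (ha₀' i) (by rw [← (memA a).mp haA]; exact hmax a haC))
    have hja : j ∈ A := (memA j).mpr (by rw [← hxij]; exact (memA i).mp hia)
    exact hij ((hone i hi hia).trans (hone j hj hja).symm)
  have hAcard : n + 1 ≤ A.card + d := by
    by_contra hsmall
    push_neg at hsmall
    have hAle : A.card ≤ n := le_trans (Finset.card_le_univ A)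
      (le_of_eq (by rw [Fintype.card_fin]))
    have hRcard : Aᶜ.card = n - A.card := by
      rw [Finset.card_compl, Fintype.card_fin]
    obtain ⟨D₁, hD₁sub, hD₁card⟩ := Finset.exists_subset_card_eq (s := Aᶜ) (n := d) (by omega)
    have hD₁A : ∀ i ∈ D₁, i ∉ A := fun i hi => Finset.mem_compl.mp (hD₁sub hi)
    have ha₀D : a₀ ∉ D₁ := fun hmem => hD₁A a₀ hmem ha₀A
    have hC₁card : (insert a₀ D₁).card = d + 1 := by
      rw [Finset.card_insert_of_notMem ha₀D, hD₁card]
    by_cases hC₁ : insert a₀ D₁ = C₀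
    · by_cases h2A : 1 < A.card
      · obtain ⟨a', ha'A, ha'ne⟩ := Finset.exists_mem_ne h2A a₀
        have ha'D : a' ∉ D₁ := fun hmem => hD₁A a' hmem ha'A
        have hC₂card : (insert a' D₁).card = d + 1 := by
          rw [Finset.card_insert_of_notMem ha'D, hD₁card]
        have hC₂ne : insert a' D₁ ≠ C₀ := by
          rw [← hC₁]
          intro he
          have h3 : a' ∈ insert a₀ D₁ := he ▸ Finset.mem_insert_self a' D₁
          rcases Finset.mem_insert.mp h3 with h' | h'
          · exact ha'ne h'
          · exact ha'D h'
        refine bad _ hC₂card hC₂ne a' (Finset.mem_insert_self _ _) ha'A ?_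
        intro i hiC hiA
        rcases Finset.mem_insert.mp hiC with h' | h'
        · exact h'
        · exact absurd hiA (hD₁A i h')
      · have hA1 : A.card = 1 := by
          have : 0 < A.card := Finset.card_pos.mpr ⟨a₀, ha₀A⟩
          omega
        obtain ⟨b, hbR, hbD⟩ : ∃ b ∈ Aᶜ, b ∉ D₁ := by
          by_contra hcon
          push_neg at hcon
          have := Finset.card_le_card hcon
          omega
        obtain ⟨c, hc⟩ := Finset.card_pos.mp (show 0 < D₁.card by omega)
        set D₂ : Finset (Fin n) := insert b (D₁.erase c) with hD₂
        have hD₂sub : D₂ ⊆ Aᶜ := by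
          intro i hi
          rcases Finset.mem_insert.mp hi with h' | h'
          · exact h' ▸ hbR
          · exact hD₁sub (Finset.erase_subset _ _ h')
        have hD₂A : ∀ i ∈ D₂, i ∉ A := fun i hi => Finset.mem_compl.mp (hD₂sub hi)
        have hbe : b ∉ D₁.erase c := fun hmem => hbD (Finset.erase_subset _ _ hmem)
        have hD₂card : D₂.card = d := by
          rw [hD₂, Finset.card_insert_of_notMem hbe, Finset.card_erase_of_mem hc, hD₁card]
          omega
        have ha₀D₂ : a₀ ∉ D₂ := fun hmem => hD₂A a₀ hmem ha₀A
        have hC₂card : (insert a₀ D₂).card = d + 1 := by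
          rw [Finset.card_insert_of_notMem ha₀D₂, hD₂card]
        have hC₂ne : insert a₀ D₂ ≠ C₀ := by
          rw [← hC₁]
          intro he
          have hb : b ∈ insert a₀ D₁ :=
            he ▸ (Finset.mem_insert_of_mem (Finset.mem_insert_self b _))
          rcases Finset.mem_insert.mp hb with h' | h'
          · exact (Finset.mem_compl.mp hbR) (h' ▸ ha₀A)
          · exact hbD h'
        refine bad _ hC₂card hC₂ne a₀ (Finset.mem_insert_self _ _) ha₀A ?_
        intro i hiC hiA
        rcases Finset.mem_insert.mp hiC with h' | h'
        · exact h'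
        · exact absurd hiA (hD₂A i h')
    · refine bad _ hC₁card hC₁ a₀ (Finset.mem_insert_self _ _) ha₀A ?_
      intro i hiC hiA
      rcases Finset.mem_insert.mp hiC with h' | h'
      · exact h'
      · exact absurd hiA (hD₁A i h')
  have hint : 1 < (C₀ ∩ A).card := by
    have h1 := Finset.card_inter_add_card_union C₀ A
    have h2 : (C₀ ∪ A).card ≤ n := le_trans (Finset.card_le_univ _)
      (le_of_eq (by rw [Fintype.card_fin]))
    omega
  obtain ⟨i, j, hi, hj, hij⟩ := Finset.one_lt_card_iff.mp hint
  obtain ⟨hiC, hiA⟩ := Finset.mem_inter.mp hi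
  obtain ⟨hjC, hjA⟩ := Finset.mem_inter.mp hj
  refine ⟨i, hiC, j, hjC, hij, ?_, ?_⟩
  · rw [(memA i).mp hiA, (memA j).mp hjA]
  · intro k hk
    rw [(memA i).mp hiA]
    exact ha₀' k

lemma exists_minimal_basis {n : ℕ} (M : CircuitSet n) (B : Set (Finset (Fin n)))
    (hB : IsTropicalBasis M B) : ∃ B₀ ⊆ B, IsMinimalTropicalBasis M B₀ := by
  have hwf : WellFoundedLT (Set (Finset (Fin n))) := inferInstance
  obtain ⟨B₀, hB₀mem, hB₀min⟩ := hwf.wf.has_min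
    {B' | B' ⊆ B ∧ IsTropicalBasis M B'} ⟨B, subset_rfl, hB⟩
  refine ⟨B₀, hB₀mem.1, hB₀mem.2, ?_⟩
  intro B' hB'ss hB'
  exact hB₀min B' ⟨subset_trans hB'ss.subset hB₀mem.1, hB'⟩ hB'ss

lemma drop_basis {n d : ℕ} (hd : 2 ≤ d) (hn2 : d + 2 ≤ n) (M : CircuitSet n)
    (hM : M.circuits = {C : Finset (Fin n) | C.card = d + 1}) (C₀ : Finset (Fin n))
    (hC₀ : C₀ ∈ M.circuits) : IsTropicalBasis M (M.circuits \ {C₀}) := by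
  refine ⟨Set.diff_subset, Set.Subset.antisymm ?_ ?_⟩
  · rintro x ⟨hxTP, hxI⟩
    refine ⟨hxTP, ?_⟩
    rw [Set.mem_iInter₂] at hxI ⊢
    intro D hD
    by_cases hDC : D = C₀
    · subst hDC
      refine key_drop hd hn2 D (by rw [hM] at hD; exact hD) x ?_
      intro C hC hne
      exact hxI C ⟨by rw [hM]; exact hC, hne⟩
    · exact hxI D ⟨hD, hDC⟩
  · rintro x ⟨hxTP, hxI⟩
    refine ⟨hxTP, ?_⟩
    rw [Set.mem_iInter₂] at hxI ⊢
    intro D hD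
    exact hxI D hD.1

lemma not_unique {n d : ℕ} (hd : 2 ≤ d) (hn2 : d + 2 ≤ n) (M : CircuitSet n)
    (hM : M.circuits = {C : Finset (Fin n) | C.card = d + 1}) :
    ¬ HasUniqueMinimalTropicalBasis M := by
  have hnpos : 0 < n := by omega
  rintro ⟨B₀, hB₀, huniq⟩
  have hempty : B₀ = ∅ := by
    rw [Set.eq_empty_iff_forall_notMem]
    intro C hC
    have hCc : C ∈ M.circuits := hB₀.1.1 hC
    obtain ⟨B₁, hB₁sub, hB₁min⟩ := exists_minimal_basis M _ (drop_basis hd hn2 M hM C hCc)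
    have e : B₁ = B₀ := huniq B₁ hB₁min
    rw [e] at hB₁sub
    exact (hB₁sub hC).2 rfl
  rw [hempty] at hB₀
  have hTB : IsTropicalBasis M ∅ := hB₀.1
  have hx : (fun i : Fin n => if i = ⟨0, hnpos⟩ then (0:EReal) else ⊥) ∈
      TP n ∩ ⋂ D ∈ M.circuits, V D := by
    rw [← hTB.2]
    exact ⟨x0_TP hnpos, by simp⟩
  set C₀ : Finset (Fin n) := Finset.univ.map (Fin.castLEEmb (show d + 1 ≤ n by omega)) with hC₀
  have hC₀card : C₀.card = d + 1 := by
    rw [hC₀, Finset.card_map, Finset.card_univ, Fintype.card_fin]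
  have h0mem : (⟨0, hnpos⟩ : Fin n) ∈ C₀ := by
    rw [hC₀, Finset.mem_map]
    exact ⟨⟨0, by omega⟩, Finset.mem_univ _, Fin.ext rfl⟩
  have hxV : (fun i : Fin n => if i = ⟨0, hnpos⟩ then (0:EReal) else ⊥) ∈ V C₀ := by
    have h2 := hx.2
    rw [Set.mem_iInter₂] at h2
    exact h2 C₀ (by rw [hM]; exact hC₀card)
  exact x0_not_V hnpos C₀ h0mem hxV

lemma hasUnique_empty {n : ℕ} (M : CircuitSet n) (h : M.circuits = ∅) :
    HasUniqueMinimalTropicalBasis M := by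
  refine ⟨∅, ⟨⟨Set.empty_subset _, by rw [h]⟩, fun B' hB' _ => absurd (Set.subset_empty_iff.mp hB'.subset) hB'.ne⟩, ?_⟩
  intro B hB
  have h2 := hB.1.1
  rw [h, Set.subset_empty_iff] at h2
  exact h2

lemma hasUnique_one {n d : ℕ} (hd : 2 ≤ d) (hn : n = d + 1) (M : CircuitSet n)
    (hM : M.circuits = {C : Finset (Fin n) | C.card = d + 1}) :
    HasUniqueMinimalTropicalBasis M := by
  subst hn
  have hnpos : 0 < d + 1 := by omega
  have hcirc : M.circuits = {Finset.univ} := by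
    rw [hM]
    ext C
    simp only [Set.mem_setOf_eq, Set.mem_singleton_iff]
    rw [← Finset.card_eq_iff_eq_univ, Fintype.card_fin]
  have hempty_not : ¬ IsTropicalBasis M ∅ := by
    rintro ⟨-, heq⟩
    have hx : (fun i : Fin (d+1) => if i = ⟨0, hnpos⟩ then (0:EReal) else ⊥) ∈
        TP (d+1) ∩ ⋂ D ∈ M.circuits, V D := by
      rw [← heq]
      exact ⟨x0_TP hnpos, by simp⟩
    have h2 := hx.2
    rw [Set.mem_iInter₂] at h2
    exact x0_not_V hnpos Finset.univ (Finset.mem_univ _)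
      (h2 Finset.univ (by rw [hcirc]; rfl))
  refine ⟨{Finset.univ}, ⟨⟨by rw [hcirc], by rw [hcirc]⟩, ?_⟩, ?_⟩
  · intro B' hB'
    rw [Set.ssubset_singleton_iff] at hB'
    subst hB'
    exact hempty_not
  · intro B hB
    have hsub := hB.1.1
    rw [hcirc] at hsub
    rcases Set.subset_singleton_iff_eq.mp hsub with h | h
    · exact absurd (h ▸ hB.1) hempty_not
    · exact h

theorem stmt15 {d n : ℕ} (hd : 2 ≤ d) (hn : d ≤ n) (M : CircuitSet n)
    (hM : M.circuits = {C : Finset (Fin n) | C.card = d + 1}) :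
    ((∀ (K : Type) [Field K], Represents K M) ↔ Represents (ZMod 2) M) ∧
      (Represents (ZMod 2) M ↔ HasUniqueMinimalTropicalBasis M) := by
  rcases Nat.lt_or_ge n (d + 2) with hsmall | hbig
  · have hrep : ∀ (K : Type) [Field K], Represents K M := by
      intro K _
      rcases Nat.lt_or_ge n (d + 1) with h1 | h2
      · exact represents_free K h1 M hM
      · have he : n = d + 1 := by omega
        subst he
        exact represents_circ K M hM
    have huniq : HasUniqueMinimalTropicalBasis M := by
      rcases Nat.lt_or_ge n (d + 1) with h1 | h2
      · apply hasUnique_empty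
        rw [hM]
        ext C
        simp only [Set.mem_setOf_eq, Set.mem_empty_iff_false, iff_false]
        intro hc
        have h3 := Finset.card_le_univ C
        rw [Fintype.card_fin] at h3
        omega
      · exact hasUnique_one hd (by omega) M hM
    exact ⟨⟨fun h => h (ZMod 2), fun _ => hrep⟩, ⟨fun _ => huniq, fun _ => hrep (ZMod 2)⟩⟩
  · have h1 : ¬ Represents (ZMod 2) M := not_represents hd hbig M hM
    have h2 : ¬ HasUniqueMinimalTropicalBasis M := not_unique hd hbig M hM
    exact ⟨iff_of_false (fun h => h1 (h (ZMod 2))) h1, iff_of_false h1 h2⟩
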